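/- (Delsarte code–anticode bound) Let F be an alphabet of size q ≥ 2, let n ≥ 1, and d ≥ 1. Then A_q(n,d) · A*_q(n,d−1) ≤ q^n. -/
import Mathlib


open Filter Real Set

/-- `C` is a code with minimum distance at least `d`. -/
def IsCode (q n d : ℕ) (C : Finset (Fin n → Fin q)) : Prop :=
  ∀ c ∈ C, ∀ c' ∈ C, c ≠ c' → d ≤ hammingDist c c'

/-- `A_q(n,d)`: maximum size of a code of length `n` and minimum distance at least `d`. -/
noncomputable def maxCodeSize (q n d : ℕ) : ℕ :=
  sSup {M : ℕ | ∃ C : Finset (Fin n → Fin q), IsCode q n d C ∧ C.card = M}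

/-- `S` is an anticode of diameter at most `w`. -/
def IsAnticode (q n w : ℕ) (S : Finset (Fin n → Fin q)) : Prop :=
  S.Nonempty ∧ ∀ c ∈ S, ∀ c' ∈ S, hammingDist c c' ≤ w

/-- `A*_q(n,w)`: maximum size of an anticode of diameter at most `w` in `F^n`. -/
noncomputable def maxAnticodeSize (q n w : ℕ) : ℕ :=
  sSup {M : ℕ | ∃ S : Finset (Fin n → Fin q), IsAnticode q n w S ∧ S.card = M}

lemma key_bound (q n d : ℕ) (hq : 2 ≤ q) (hd : 1 ≤ d)
    (C S : Finset (Fin n → Fin q)) (hC : IsCode q n d C)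
    (hS : IsAnticode q n (d - 1) S) : C.card * S.card ≤ q ^ n := by
  haveI : NeZero q := ⟨by omega⟩
  have hinj : ∀ p ∈ C ×ˢ S, ∀ p' ∈ C ×ˢ S,
      (fun p : (Fin n → Fin q) × (Fin n → Fin q) => p.1 + p.2) p =
      (fun p : (Fin n → Fin q) × (Fin n → Fin q) => p.1 + p.2) p' → p = p' := by
    rintro ⟨c, s⟩ hp ⟨c', s'⟩ hp' h
    simp only [Finset.mem_product] at hp hp'
    simp only at h
    have hcc : c = c' := by
      by_contra hne
      have h1 : d ≤ hammingDist c c' := hC c hp.1 c' hp'.1 hne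
      have h2 : hammingDist s' s ≤ d - 1 := hS.2 s' hp'.2 s hp.2
      have heq : hammingDist c c' = hammingDist s' s := by
        unfold hammingDist
        congr 1
        apply Finset.filter_congr
        intro i _
        have := congrFun h i
        simp only [Pi.add_apply] at this
        rw [ne_eq, ne_eq, not_iff_not]
        constructor
        · intro he; rw [he] at this; exact (add_left_cancel this).symm
        · intro he; rw [← he] at this; exact add_right_cancel this
      omega
    subst hcc
    have : s = s' := add_left_cancel h
    simp [this]
  have := Finset.card_le_card_of_injOn
    (fun p : (Fin n → Fin q) × (Fin n → Fin q) => p.1 + p.2)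
    (fun p _ => Finset.mem_univ (α := Fin n → Fin q) (p.1 + p.2))
    (fun p hp p' hp' h => hinj p (Finset.mem_coe.mp hp) p' (Finset.mem_coe.mp hp') h)
  simp only [Finset.card_product, Finset.card_univ] at this
  calc C.card * S.card ≤ Fintype.card (Fin n → Fin q) := this
    _ = q ^ n := by simp

/-- Delsarte code-anticode bound. -/
theorem stmt5 (q n d : ℕ) (hq : 2 ≤ q) (hn : 1 ≤ n) (hd : 1 ≤ d) :
    maxCodeSize q n d * maxAnticodeSize q n (d - 1) ≤ q ^ n := by
  haveI : NeZero q := ⟨by omega⟩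
  have hbddC : BddAbove {M : ℕ | ∃ C : Finset (Fin n → Fin q), IsCode q n d C ∧ C.card = M} := by
    refine ⟨q ^ n, ?_⟩
    rintro M ⟨C, _, rfl⟩
    calc C.card ≤ Fintype.card (Fin n → Fin q) := Finset.card_le_univ C
      _ = q ^ n := by simp
  have hbddS : BddAbove {M : ℕ | ∃ S : Finset (Fin n → Fin q),
      IsAnticode q n (d - 1) S ∧ S.card = M} := by
    refine ⟨q ^ n, ?_⟩
    rintro M ⟨S, _, rfl⟩
    calc S.card ≤ Fintype.card (Fin n → Fin q) := Finset.card_le_univ S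
      _ = q ^ n := by simp
  have hneC : {M : ℕ | ∃ C : Finset (Fin n → Fin q), IsCode q n d C ∧ C.card = M}.Nonempty :=
    ⟨0, ∅, by intro c hc; simp at hc, by simp⟩
  have hneS : {M : ℕ | ∃ S : Finset (Fin n → Fin q),
      IsAnticode q n (d - 1) S ∧ S.card = M}.Nonempty := by
    refine ⟨1, {fun _ => 0}, ⟨⟨_, Finset.mem_singleton_self _⟩, ?_⟩, by simp⟩
    intro c hc c' hc'
    simp only [Finset.mem_singleton] at hc hc'
    subst hc; subst hc'
    simp
  obtain ⟨C, hC, hCcard⟩ := Nat.sSup_mem hneC hbddC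
  obtain ⟨S, hS, hScard⟩ := Nat.sSup_mem hneS hbddS
  rw [maxCodeSize, maxAnticodeSize, ← hCcard, ← hScard]
  exact key_bound q n d hq hd C S hC hS
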